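/- Let N ≥ 2, let C = {x ∈ ℝ^N : x_1 > x_2 > ⋯ > x_N > 0}, and let F be the type A prepotential with Λ = e^{3/2}. Then for all x ∈ C and every index i, e^{∑_{p=1}^N T_ip(x)} = x_i, where T_ij(x) = ∂²F/∂x_i∂x_j(x). -/

import Mathlib

open Real Finset

/-- Partial derivative in the `i`-th coordinate direction. -/
noncomputable def pd {N : ℕ} (i : Fin N) (f : (Fin N → ℝ) → ℝ) : (Fin N → ℝ) → ℝ :=
  fun x => fderiv ℝ f x (Pi.single i 1)

/-- Hessian entry `T_ij = ∂²f/∂x_i∂x_j`. -/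
noncomputable def hess {N : ℕ} (f : (Fin N → ℝ) → ℝ) (i j : Fin N) : (Fin N → ℝ) → ℝ :=
  pd i (pd j f)

/-- The open cone `x₁ > x₂ > ⋯ > x_N > 0`. -/
def cone (N : ℕ) : Set (Fin N → ℝ) := {x | StrictAnti x ∧ ∀ i, 0 < x i}

/-- The type A prepotential with cut-off `Λ`. -/
noncomputable def FA (N : ℕ) (Λ : ℝ) (x : Fin N → ℝ) : ℝ :=
  (1/2) * ∑ i : Fin N, ∑ j : Fin N,
      (if i < j then (x i - x j)^2 * Real.log ((x i - x j)/Λ) else 0)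
  + (1/2) * ∑ i : Fin N, (x i)^2 * Real.log (x i / Λ)

/-- for the type A prepotential with `Λ = e^{3/2}`, on the cone,
`e^{∑_p T_ip(x)} = x_i` for every `i`. -/
noncomputable def psi (u : ℝ) : ℝ := u * Real.log u - u

lemma hasDerivAt_phi {u : ℝ} (hu : u ≠ 0) :
    HasDerivAt (fun v => v^2 * Real.log (v / Real.exp (3/2))) (2 * psi u) u := by
  have h1 : HasDerivAt (fun v : ℝ => v^2 * (Real.log v - 3/2))
      ((2 * u ^ 1) * (Real.log u - 3/2) + u^2 * u⁻¹) u :=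
    (hasDerivAt_pow 2 u).mul ((Real.hasDerivAt_log hu).sub_const _)
  have heq : (fun v : ℝ => v^2 * Real.log (v / Real.exp (3/2)))
      =ᶠ[nhds u] (fun v : ℝ => v^2 * (Real.log v - 3/2)) := by
    filter_upwards [isOpen_ne.mem_nhds hu] with v hv
    rw [Real.log_div hv (Real.exp_ne_zero _), Real.log_exp]
  have h2 := h1.congr_of_eventuallyEq heq
  refine h2.congr_deriv ?_
  unfold psi
  field_simp
  ring

lemma hasDerivAt_psi {u : ℝ} (hu : u ≠ 0) : HasDerivAt psi (Real.log u) u := by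
  have h1 : HasDerivAt (fun v : ℝ => v * Real.log v - v)
      ((1 * Real.log u + u * u⁻¹) - 1) u :=
    ((hasDerivAt_id u).mul (Real.hasDerivAt_log hu)).sub (hasDerivAt_id u)
  refine (h1.congr_deriv ?_).congr_of_eventuallyEq (Filter.Eventually.of_forall fun v => rfl)
  field_simp
  ring

noncomputable def pr (N : ℕ) (i : Fin N) : (Fin N → ℝ) →L[ℝ] ℝ := ContinuousLinearMap.proj i

noncomputable def G (N : ℕ) (p : Fin N) (y : Fin N → ℝ) : ℝ :=
  (∑ j, if p < j then psi (y p - y j) else 0)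
  - (∑ j, if j < p then psi (y j - y p) else 0) + psi (y p)

lemma hasFDerivAt_FA (N : ℕ) {y : Fin N → ℝ} (hy : y ∈ cone N) :
    HasFDerivAt (FA N (Real.exp (3/2)))
      ((1/2 : ℝ) • (∑ i, ∑ j, if i < j then (2 * psi (y i - y j)) • (pr N i - pr N j) else 0)
        + (1/2 : ℝ) • ∑ i, (2 * psi (y i)) • pr N i) y := by
  obtain ⟨hanti, hpos⟩ := hy
  have h1 : ∀ i j : Fin N, HasFDerivAt
      (fun x : Fin N → ℝ => if i < j then (x i - x j)^2 * Real.log ((x i - x j)/Real.exp (3/2)) else 0)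
      (if i < j then (2 * psi (y i - y j)) • (pr N i - pr N j) else 0) y := by
    intro i j
    by_cases h : i < j
    · simp only [if_pos h]
      have hu : y i - y j ≠ 0 := sub_ne_zero.2 (hanti h).ne'
      have hL : HasFDerivAt (fun x : Fin N → ℝ => x i - x j) (pr N i - pr N j) y :=
        ((pr N i).hasFDerivAt).sub ((pr N j).hasFDerivAt)
      exact (hasDerivAt_phi hu).comp_hasFDerivAt y hL
    · simp only [if_neg h]
      exact hasFDerivAt_const 0 y
  have h2 : HasFDerivAt
      (fun x : Fin N → ℝ => ∑ i : Fin N, ∑ j : Fin N,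
        if i < j then (x i - x j)^2 * Real.log ((x i - x j)/Real.exp (3/2)) else 0)
      (∑ i : Fin N, ∑ j : Fin N, if i < j then (2 * psi (y i - y j)) • (pr N i - pr N j) else 0) y :=
    HasFDerivAt.fun_sum fun i _ => HasFDerivAt.fun_sum fun j _ => h1 i j
  have h3 : HasFDerivAt
      (fun x : Fin N → ℝ => ∑ i : Fin N, (x i)^2 * Real.log (x i / Real.exp (3/2)))
      (∑ i : Fin N, (2 * psi (y i)) • pr N i) y := by
    refine HasFDerivAt.fun_sum fun i _ => ?_
    exact (hasDerivAt_phi (hpos i).ne').comp_hasFDerivAt y (pr N i).hasFDerivAt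
  have := (h2.const_mul (1/2 : ℝ)).add (h3.const_mul (1/2 : ℝ))
  exact this

lemma pd_FA (N : ℕ) (p : Fin N) {y : Fin N → ℝ} (hy : y ∈ cone N) :
    pd p (FA N (Real.exp (3/2))) y = G N p y := by
  have h := (hasFDerivAt_FA N hy).fderiv
  rw [pd, h]
  simp only [ContinuousLinearMap.add_apply, ContinuousLinearMap.smul_apply,
    ContinuousLinearMap.sum_apply,
    apply_ite (fun L : (Fin N → ℝ) →L[ℝ] ℝ => L (Pi.single p 1)),
    ContinuousLinearMap.sub_apply, ContinuousLinearMap.zero_apply, pr,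
    ContinuousLinearMap.proj_apply, Pi.single_apply, smul_eq_mul]
  have e1 : ∀ i j : Fin N,
      (if i < j then 2 * psi (y i - y j) * ((if i = p then (1:ℝ) else 0) - (if j = p then 1 else 0)) else 0)
      = (if i = p then (if i < j then 2 * psi (y i - y j) else 0) else 0)
        - (if j = p then (if i < j then 2 * psi (y i - y j) else 0) else 0) := by
    intro i j
    by_cases h1 : i < j <;> by_cases h2 : i = p <;> by_cases h3 : j = p <;>
      simp [h1, h2, h3, apply_ite (Neg.neg : ℝ → ℝ)] <;> ring
  have e2 : ∀ (c : Prop) [Decidable c] (f : Fin N → ℝ),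
      (∑ j : Fin N, if c then f j else 0) = if c then ∑ j : Fin N, f j else 0 := by
    intro c _ f; split <;> simp
  have e3 : ∀ (c : Fin N → Prop) [DecidablePred c] (f : Fin N → ℝ),
      (∑ j : Fin N, if c j then 2 * f j else 0) = 2 * ∑ j : Fin N, (if c j then f j else 0) := by
    intro c _ f
    rw [Finset.mul_sum]
    exact Finset.sum_congr rfl fun j _ => by split <;> ring
  simp only [e1, Finset.sum_sub_distrib, e2, mul_ite, mul_one, mul_zero,
    Finset.sum_ite_eq', Finset.mem_univ, if_pos]
  rw [e3 (fun j => p < j) (fun j => psi (y p - y j)),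
    e3 (fun x => x < p) (fun x => psi (y x - y p))]
  unfold G
  ring

lemma cone_isOpen (N : ℕ) : IsOpen (cone N) := by
  have : cone N = (⋂ (i : Fin N), ⋂ (j : Fin N), ⋂ (_ : i < j), {y : Fin N → ℝ | y j < y i})
      ∩ ⋂ (i : Fin N), {y : Fin N → ℝ | 0 < y i} := by
    ext y
    simp only [cone, Set.mem_inter_iff, Set.mem_iInter, Set.mem_setOf_eq]
    exact ⟨fun ⟨h1, h2⟩ => ⟨fun i j hij => h1 hij, h2⟩, fun ⟨h1, h2⟩ => ⟨fun i j hij => h1 i j hij, h2⟩⟩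
  rw [this]
  refine IsOpen.inter ?_ ?_
  · exact isOpen_iInter_of_finite fun i => isOpen_iInter_of_finite fun j =>
      isOpen_iInter_of_finite fun _ => isOpen_lt (continuous_apply j) (continuous_apply i)
  · exact isOpen_iInter_of_finite fun i => isOpen_lt continuous_const (continuous_apply i)

noncomputable def K (N : ℕ) (i j : Fin N) (x : Fin N → ℝ) : ℝ :=
  if i < j then Real.log (x i - x j) else if j < i then Real.log (x j - x i) else 0

lemma hasFDerivAt_G (N : ℕ) (p : Fin N) {x : Fin N → ℝ} (hx : x ∈ cone N) :
    HasFDerivAt (G N p)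
      ((∑ j, if p < j then (Real.log (x p - x j)) • (pr N p - pr N j) else 0)
        - (∑ j, if j < p then (Real.log (x j - x p)) • (pr N j - pr N p) else 0)
        + (Real.log (x p)) • pr N p) x := by
  obtain ⟨hanti, hpos⟩ := hx
  have hterm : ∀ a b : Fin N, a < b → HasFDerivAt (fun y : Fin N → ℝ => psi (y a - y b))
      ((Real.log (x a - x b)) • (pr N a - pr N b)) x := by
    intro a b hab
    have hu : x a - x b ≠ 0 := sub_ne_zero.2 (hanti hab).ne'
    have hL : HasFDerivAt (fun y : Fin N → ℝ => y a - y b) (pr N a - pr N b) x :=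
      ((pr N a).hasFDerivAt).sub ((pr N b).hasFDerivAt)
    exact (hasDerivAt_psi hu).comp_hasFDerivAt x hL
  have h1 : HasFDerivAt (fun y : Fin N → ℝ => ∑ j : Fin N, if p < j then psi (y p - y j) else 0)
      (∑ j, if p < j then (Real.log (x p - x j)) • (pr N p - pr N j) else 0) x := by
    refine HasFDerivAt.fun_sum fun j _ => ?_
    by_cases h : p < j
    · simp only [if_pos h]; exact hterm p j h
    · simp only [if_neg h]; exact hasFDerivAt_const 0 x
  have h2 : HasFDerivAt (fun y : Fin N → ℝ => ∑ j : Fin N, if j < p then psi (y j - y p) else 0)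
      (∑ j, if j < p then (Real.log (x j - x p)) • (pr N j - pr N p) else 0) x := by
    refine HasFDerivAt.fun_sum fun j _ => ?_
    by_cases h : j < p
    · simp only [if_pos h]; exact hterm j p h
    · simp only [if_neg h]; exact hasFDerivAt_const 0 x
  have h3 : HasFDerivAt (fun y : Fin N → ℝ => psi (y p)) ((Real.log (x p)) • pr N p) x :=
    (hasDerivAt_psi (u := (pr N p) x) (hpos p).ne').comp_hasFDerivAt x (pr N p).hasFDerivAt
  exact (h1.sub h2).add h3

lemma hess_FA (N : ℕ) {x : Fin N → ℝ} (hx : x ∈ cone N) (i p : Fin N) :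
    hess (FA N (Real.exp (3/2))) i p x =
      if p = i then Real.log (x i) + ∑ j : Fin N, K N i j x else -(K N i p x) := by
  have hev : pd p (FA N (Real.exp (3/2))) =ᶠ[nhds x] G N p := by
    filter_upwards [(cone_isOpen N).mem_nhds hx] with y hy
    exact pd_FA N p hy
  have hfd : fderiv ℝ (pd p (FA N (Real.exp (3/2)))) x = fderiv ℝ (G N p) x := hev.fderiv_eq
  rw [hess, pd, hfd, (hasFDerivAt_G N p hx).fderiv]
  simp only [ContinuousLinearMap.add_apply, ContinuousLinearMap.sub_apply,
    ContinuousLinearMap.smul_apply, ContinuousLinearMap.sum_apply,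
    apply_ite (fun L : (Fin N → ℝ) →L[ℝ] ℝ => L (Pi.single i 1)),
    ContinuousLinearMap.zero_apply, pr, ContinuousLinearMap.proj_apply,
    Pi.single_apply, smul_eq_mul]
  by_cases hpi : p = i
  · subst hpi
    simp only [eq_self_iff_true, if_true, mul_one]
    have e1 : ∀ j : Fin N,
        (if p < j then Real.log (x p - x j) * (1 - if j = p then (1:ℝ) else 0) else 0)
        = if p < j then Real.log (x p - x j) else 0 := by
      intro j
      by_cases h : p < j
      · simp [h, (ne_of_gt h)]
      · simp [h]
    have e2 : ∀ j : Fin N,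
        (if j < p then Real.log (x j - x p) * ((if j = p then (1:ℝ) else 0) - 1) else 0)
        = -(if j < p then Real.log (x j - x p) else 0) := by
      intro j
      by_cases h : j < p
      · simp [h, (ne_of_lt h)]
      · simp [h]
    simp only [e1, e2, Finset.sum_neg_distrib]
    have e3 : (∑ j : Fin N, if p < j then Real.log (x p - x j) else 0)
        + (∑ j : Fin N, if j < p then Real.log (x j - x p) else 0) = ∑ j : Fin N, K N p j x := by
      rw [← Finset.sum_add_distrib]
      refine Finset.sum_congr rfl fun j _ => ?_
      unfold K
      rcases lt_trichotomy p j with h | h | h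
      · simp [h, not_lt.2 h.le]
      · simp [h]
      · simp [h, not_lt.2 h.le]
    ring_nf
    ring_nf at e3
    rw [← e3]
    ring
  · simp only [if_neg hpi, mul_zero, add_zero, zero_sub, sub_zero, mul_neg, mul_one]
    have e1 : ∀ j : Fin N,
        (if p < j then -(Real.log (x p - x j) * if j = i then (1:ℝ) else 0) else 0)
        = if j = i then (if p < i then -Real.log (x p - x i) else 0) else 0 := by
      intro j
      by_cases h2 : j = i
      · subst h2; by_cases h : p < j <;> simp [h]
      · by_cases h : p < j <;> simp [h, h2]
    have e2 : ∀ j : Fin N,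
        (if j < p then Real.log (x j - x p) * (if j = i then (1:ℝ) else 0) else 0)
        = if j = i then (if i < p then Real.log (x i - x p) else 0) else 0 := by
      intro j
      by_cases h2 : j = i
      · subst h2; by_cases h : j < p <;> simp [h]
      · by_cases h : j < p <;> simp [h, h2]
    simp only [e1, e2, Finset.sum_ite_eq', Finset.mem_univ, if_pos]
    unfold K
    rcases lt_trichotomy p i with h | h | h
    · simp [h, not_lt.2 h.le]
    · exact absurd h hpi
    · simp [h, not_lt.2 h.le]

theorem typeA_row_sum (N : ℕ) (hN : 2 ≤ N) (x : Fin N → ℝ) (hx : x ∈ cone N)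
    (i : Fin N) :
    Real.exp (∑ p, hess (FA N (Real.exp (3/2))) i p x) = x i := by
  have hsum : (∑ p : Fin N, hess (FA N (Real.exp (3/2))) i p x) = Real.log (x i) := by
    have h1 : (∑ p : Fin N, hess (FA N (Real.exp (3/2))) i p x)
        = ∑ p : Fin N, (if p = i then Real.log (x i) + ∑ j : Fin N, K N i j x
            else -(K N i p x)) :=
      Finset.sum_congr rfl fun p _ => hess_FA N hx i p
    rw [h1, ← Finset.add_sum_erase _ _ (Finset.mem_univ i), if_pos rfl]
    have h2 : (∑ p ∈ Finset.univ.erase i,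
        (if p = i then Real.log (x i) + ∑ j : Fin N, K N i j x else -(K N i p x)))
        = -∑ p ∈ Finset.univ.erase i, K N i p x := by
      rw [← Finset.sum_neg_distrib]
      refine Finset.sum_congr rfl fun p hp => ?_
      rw [if_neg (Finset.ne_of_mem_erase hp)]
    have h3 : (∑ j : Fin N, K N i j x) = ∑ p ∈ Finset.univ.erase i, K N i p x := by
      rw [← Finset.add_sum_erase _ _ (Finset.mem_univ i)]
      have : K N i i x = 0 := by simp [K]
      rw [this, zero_add]
    rw [h2, h3]
    ring
  rw [hsum, Real.exp_log (hx.2 i)]
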